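/- The double integral over (0,1]² of min(1/2, 1−a)·min(1/2, 1−b)·min((1−a)/b, (1−b)/a) da db equals (7/6)log 2 − 37/72. -/

import Mathlib

open MeasureTheory Set

lemma ftc {f F : ℝ → ℝ} {l r : ℝ} (hlr : l ≤ r)
    (hd : ∀ x ∈ Set.Icc l r, HasDerivAt F (f x) x)
    (hc : ContinuousOn f (Set.Icc l r)) :
    ∫ x in Set.Ioc l r, f x = F r - F l := by
  rw [← intervalIntegral.integral_of_le hlr]
  exact intervalIntegral.integral_eq_sub_of_hasDerivAt
    (fun x hx => hd x (by rwa [Set.uIcc_of_le hlr] at hx))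
    (hc.intervalIntegrable_of_Icc hlr)

lemma ftc' {f F : ℝ → ℝ} {l r : ℝ} (hlr : l ≤ r)
    (hF : ContinuousOn F (Set.Icc l r))
    (hd : ∀ x ∈ Set.Ioo l r, HasDerivAt F (f x) x)
    (hi : MeasureTheory.IntegrableOn f (Set.Ioc l r)) :
    ∫ x in Set.Ioc l r, f x = F r - F l := by
  rw [← intervalIntegral.integral_of_le hlr]
  exact intervalIntegral.integral_eq_sub_of_hasDeriv_right_of_le hlr hF
    (fun x hx => (hd x hx).hasDerivWithinAt)
    ((intervalIntegrable_iff_integrableOn_Ioc_of_le hlr).mpr hi)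

lemma logint : MeasureTheory.IntegrableOn Real.log (Set.Ioc (0:ℝ) (1/2)) := by
  have h : MeasureTheory.IntegrableOn (fun x => -Real.log x) (Set.Ioc (0:ℝ) (1/2)) := by
    apply intervalIntegral.integrableOn_deriv_of_nonneg
      (g := fun x : ℝ => x - x * Real.log x)
    · exact (continuous_id.sub Real.continuous_mul_log).continuousOn
    · intro x hx
      have h1 : HasDerivAt (fun x : ℝ => x * Real.log x) (Real.log x + 1) x :=
        Real.hasDerivAt_mul_log hx.1.ne'
      have h2 := (hasDerivAt_id x).sub h1
      refine h2.congr_deriv ?_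
      ring
    · intro x hx
      have : Real.log x < 0 := Real.log_neg hx.1 (by linarith [hx.2])
      linarith
  have h2 := h.neg
  simp only [Pi.neg_def, neg_neg] at h2
  exact h2

noncomputable def phi1 (a : ℝ) : ℝ :=
  5/8*a - 1/3*a^2 + 1/4*(1-a)*Real.log 2 + 1/2*((1-a)*Real.log (1-a))
    - 1/4*(Real.log a - a*Real.log a)

noncomputable def phi2 (a : ℝ) : ℝ :=
  7/12*(1/a) - 13/12 - 1/4*a + 17/12*a^2 - 2/3*a^3 + 1/2*(1-a)^2*Real.log 2
    + (1-a)^2*Real.log a - 1/2*((1-a)*((1-a)*Real.log (1-a)))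

lemma inner1 {a : ℝ} (ha : 0 < a) (ha2 : a ≤ 1/2) :
    ∫ b in Set.Ioc (0:ℝ) 1,
        min (1/2) (1 - a) * min (1/2) (1 - b) * min ((1 - a) / b) ((1 - b) / a)
      = phi1 a := by
  set f : ℝ → ℝ := fun b =>
    min (1/2) (1 - a) * min (1/2) (1 - b) * min ((1 - a) / b) ((1 - b) / a) with hf
  have hma : min (1/2 : ℝ) (1 - a) = 1/2 := min_eq_left (by linarith)
  -- EqOn proofs on the four pieces
  have e1 : EqOn f (fun b => (1-b)/(4*a)) (Ioc 0 a) := by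
    intro b hb
    have hb1 : 0 < b := hb.1
    have hb2 : b ≤ a := hb.2
    have h3 : min ((1 - a) / b) ((1 - b) / a) = (1-b)/a := by
      apply min_eq_right
      rw [div_le_div_iff₀ ha hb1]
      nlinarith
    simp only [hf, hma, h3, min_eq_left (by linarith : (1:ℝ)/2 ≤ 1 - b)]
    ring
  have e2 : EqOn f (fun b => (1-a)/(4*b)) (Ioc a (1/2)) := by
    intro b hb
    have hb1 : a < b := hb.1
    have hb2 : b ≤ 1/2 := hb.2
    have h3 : min ((1 - a) / b) ((1 - b) / a) = (1-a)/b := by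
      apply min_eq_left
      rw [div_le_div_iff₀ (by linarith) ha]
      nlinarith
    simp only [hf, hma, h3, min_eq_left (by linarith : (1:ℝ)/2 ≤ 1 - b)]
    ring
  have e3 : EqOn f (fun b => (1-a)*(1-b)/(2*b)) (Ioc (1/2) (1-a)) := by
    intro b hb
    have hb1 : 1/2 < b := hb.1
    have hb2 : b ≤ 1 - a := hb.2
    have h3 : min ((1 - a) / b) ((1 - b) / a) = (1-a)/b := by
      apply min_eq_left
      rw [div_le_div_iff₀ (by linarith) ha]
      nlinarith
    simp only [hf, hma, h3, min_eq_right (by linarith : (1:ℝ) - b ≤ 1/2)]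
    ring
  have e4 : EqOn f (fun b => (1-b)^2/(2*a)) (Ioc (1-a) 1) := by
    intro b hb
    have hb1 : 1 - a < b := hb.1
    have hb2 : b ≤ 1 := hb.2
    have h3 : min ((1 - a) / b) ((1 - b) / a) = (1-b)/a := by
      apply min_eq_right
      rw [div_le_div_iff₀ ha (by linarith)]
      nlinarith
    simp only [hf, hma, h3, min_eq_right (by linarith : (1:ℝ) - b ≤ 1/2)]
    ring
  -- integrability of f on the pieces
  have I1 : IntegrableOn f (Ioc 0 a) :=
    (((by fun_prop : Continuous fun b : ℝ => (1-b)/(4*a))).integrableOn_Ioc).congr_fun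
      e1.symm measurableSet_Ioc
  have I2 : IntegrableOn f (Ioc a (1/2)) := by
    refine ((ContinuousOn.integrableOn_Icc ?_).mono_set Ioc_subset_Icc_self).congr_fun
      e2.symm measurableSet_Ioc
    refine ContinuousOn.div continuousOn_const (by fun_prop) (fun x hx => ?_)
    have := hx.1
    exact ne_of_gt (by linarith : (0:ℝ) < 4*x)
  have I3 : IntegrableOn f (Ioc (1/2) (1-a)) := by
    refine ((ContinuousOn.integrableOn_Icc ?_).mono_set Ioc_subset_Icc_self).congr_fun
      e3.symm measurableSet_Ioc
    refine ContinuousOn.div (by fun_prop) (by fun_prop) (fun x hx => ?_)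
    have := hx.1
    exact ne_of_gt (by linarith : (0:ℝ) < 2*x)
  have I4 : IntegrableOn f (Ioc (1-a) 1) :=
    (((by fun_prop : Continuous fun b : ℝ => (1-b)^2/(2*a))).integrableOn_Ioc).congr_fun
      e4.symm measurableSet_Ioc
  -- split the integral
  have u1 : Ioc (0:ℝ) (1/2) = Ioc 0 a ∪ Ioc a (1/2) := (Ioc_union_Ioc_eq_Ioc ha.le ha2).symm
  have u2 : Ioc (0:ℝ) (1-a) = Ioc 0 (1/2) ∪ Ioc (1/2) (1-a) :=
    (Ioc_union_Ioc_eq_Ioc (by linarith) (by linarith)).symm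
  have u3 : Ioc (0:ℝ) 1 = Ioc 0 (1-a) ∪ Ioc (1-a) 1 :=
    (Ioc_union_Ioc_eq_Ioc (by linarith) (by linarith)).symm
  have I12 : IntegrableOn f (Ioc 0 (1/2)) := by rw [u1]; exact I1.union I2
  have I123 : IntegrableOn f (Ioc 0 (1-a)) := by rw [u2]; exact I12.union I3
  rw [u3, setIntegral_union (Ioc_disjoint_Ioc_of_le le_rfl) measurableSet_Ioc I123 I4,
      u2, setIntegral_union (Ioc_disjoint_Ioc_of_le le_rfl) measurableSet_Ioc I12 I3,
      u1, setIntegral_union (Ioc_disjoint_Ioc_of_le le_rfl) measurableSet_Ioc I1 I2,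
      setIntegral_congr_fun measurableSet_Ioc e1,
      setIntegral_congr_fun measurableSet_Ioc e2,
      setIntegral_congr_fun measurableSet_Ioc e3,
      setIntegral_congr_fun measurableSet_Ioc e4]
  -- compute the four integrals
  have v1 : ∫ b in Ioc (0:ℝ) a, (1-b)/(4*a) = (a - a^2/2)/(4*a) - (0 - 0^2/2)/(4*a) := by
    refine ftc (l := 0) (r := a) (F := fun b : ℝ => (b - b^2/2)/(4*a))
      (f := fun b : ℝ => (1-b)/(4*a)) ha.le (fun x _ => ?_) (by fun_prop)
    have h := ((hasDerivAt_id x).sub ((hasDerivAt_pow 2 x).div_const 2)).div_const (4*a)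
    refine h.congr_deriv ?_
    push_cast
    ring
  have v2 : ∫ b in Ioc a (1/2 : ℝ), (1-a)/(4*b)
      = (1-a)/4*Real.log (1/2) - (1-a)/4*Real.log a := by
    refine ftc (l := a) (r := 1/2) (F := fun b : ℝ => (1-a)/4*Real.log b)
      (f := fun b : ℝ => (1-a)/(4*b)) ha2 (fun x hx => ?_) ?_
    · have hx0 : (0:ℝ) < x := lt_of_lt_of_le ha hx.1
      have h := (Real.hasDerivAt_log hx0.ne').const_mul ((1-a)/4)
      refine h.congr_deriv ?_ <;> field_simp <;> ring
    · refine ContinuousOn.div continuousOn_const (by fun_prop) (fun x hx => ?_)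
      have := hx.1
      exact ne_of_gt (by linarith : (0:ℝ) < 4*x)
  have v3 : ∫ b in Ioc (1/2 : ℝ) (1-a), (1-a)*(1-b)/(2*b)
      = ((1-a)/2*(Real.log (1-a) - (1-a))) - ((1-a)/2*(Real.log (1/2) - 1/2)) := by
    refine ftc (l := 1/2) (r := 1-a) (F := fun b : ℝ => (1-a)/2*(Real.log b - b))
      (f := fun b : ℝ => (1-a)*(1-b)/(2*b)) (by linarith) (fun x hx => ?_) ?_
    · have hx0 : (0:ℝ) < x := lt_of_lt_of_le (by norm_num) hx.1
      have h := ((Real.hasDerivAt_log hx0.ne').sub (hasDerivAt_id x)).const_mul ((1-a)/2)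
      refine h.congr_deriv ?_ <;> field_simp <;> ring
    · refine ContinuousOn.div (by fun_prop) (by fun_prop) (fun x hx => ?_)
      have := hx.1
      exact ne_of_gt (by linarith : (0:ℝ) < 2*x)
  have v4 : ∫ b in Ioc (1-a) (1:ℝ), (1-b)^2/(2*a)
      = -((1-(1:ℝ))^3/(6*a)) - -((1-(1-a))^3/(6*a)) := by
    refine ftc (l := 1-a) (r := 1) (F := fun b : ℝ => -((1-b)^3/(6*a)))
      (f := fun b : ℝ => (1-b)^2/(2*a)) (by linarith) (fun x _ => ?_) (by fun_prop)
    have hb : HasDerivAt (fun b : ℝ => (1:ℝ) - b) (-1) x := (hasDerivAt_id x).const_sub 1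
    have h := ((hb.pow 3).div_const (6*a)).neg
    refine h.congr_deriv ?_
    push_cast
    ring
  rw [v1, v2, v3, v4]
  have hl : Real.log (1/2 : ℝ) = -Real.log 2 := by rw [one_div, Real.log_inv]
  rw [hl]
  unfold phi1
  field_simp
  ring

lemma inner2 {a : ℝ} (ha1 : 1/2 < a) (ha2 : a ≤ 1) :
    ∫ b in Set.Ioc (0:ℝ) 1,
        min (1/2) (1 - a) * min (1/2) (1 - b) * min ((1 - a) / b) ((1 - b) / a)
      = phi2 a := by
  rcases eq_or_lt_of_le ha2 with rfl | ha2
  · have hz : ∀ b : ℝ, min (1/2 : ℝ) (1 - 1) * min (1/2) (1 - b)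
        * min ((1 - 1) / b) ((1 - b) / 1) = 0 := by
      intro b
      norm_num
    simp only [hz]
    rw [integral_zero]
    unfold phi2
    norm_num
  have ha : (0:ℝ) < a := by linarith
  have ha0 : a ≠ 0 := ne_of_gt ha
  set f : ℝ → ℝ := fun b =>
    min (1/2) (1 - a) * min (1/2) (1 - b) * min ((1 - a) / b) ((1 - b) / a) with hf
  have hma : min (1/2 : ℝ) (1 - a) = 1 - a := min_eq_right (by linarith)
  have e1 : EqOn f (fun b => (1-a)*(1-b)/(2*a)) (Ioc 0 (1-a)) := by
    intro b hb
    have hb1 : 0 < b := hb.1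
    have hb2 : b ≤ 1 - a := hb.2
    have h3 : min ((1 - a) / b) ((1 - b) / a) = (1-b)/a := by
      apply min_eq_right
      rw [div_le_div_iff₀ ha hb1]
      nlinarith
    simp only [hf, hma, h3, min_eq_left (by linarith : (1:ℝ)/2 ≤ 1 - b)]
    ring
  have e2 : EqOn f (fun b => (1-a)^2/(2*b)) (Ioc (1-a) (1/2)) := by
    intro b hb
    have hb1 : 1 - a < b := hb.1
    have hb2 : b ≤ 1/2 := hb.2
    have h3 : min ((1 - a) / b) ((1 - b) / a) = (1-a)/b := by
      apply min_eq_left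
      rw [div_le_div_iff₀ (by linarith) ha]
      nlinarith
    simp only [hf, hma, h3, min_eq_left (by linarith : (1:ℝ)/2 ≤ 1 - b)]
    ring
  have e3 : EqOn f (fun b => (1-a)^2*(1-b)/b) (Ioc (1/2) a) := by
    intro b hb
    have hb1 : 1/2 < b := hb.1
    have hb2 : b ≤ a := hb.2
    have h3 : min ((1 - a) / b) ((1 - b) / a) = (1-a)/b := by
      apply min_eq_left
      rw [div_le_div_iff₀ (by linarith) ha]
      nlinarith
    simp only [hf, hma, h3, min_eq_right (by linarith : (1:ℝ) - b ≤ 1/2)]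
    ring
  have e4 : EqOn f (fun b => (1-a)*(1-b)^2/a) (Ioc a 1) := by
    intro b hb
    have hb1 : a < b := hb.1
    have hb2 : b ≤ 1 := hb.2
    have h3 : min ((1 - a) / b) ((1 - b) / a) = (1-b)/a := by
      apply min_eq_right
      rw [div_le_div_iff₀ ha (by linarith)]
      nlinarith
    simp only [hf, hma, h3, min_eq_right (by linarith : (1:ℝ) - b ≤ 1/2)]
    ring
  have I1 : IntegrableOn f (Ioc 0 (1-a)) :=
    (((by fun_prop : Continuous fun b : ℝ => (1-a)*(1-b)/(2*a))).integrableOn_Ioc).congr_fun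
      e1.symm measurableSet_Ioc
  have I2 : IntegrableOn f (Ioc (1-a) (1/2)) := by
    refine ((ContinuousOn.integrableOn_Icc ?_).mono_set Ioc_subset_Icc_self).congr_fun
      e2.symm measurableSet_Ioc
    refine ContinuousOn.div continuousOn_const (by fun_prop) (fun x hx => ?_)
    have := hx.1
    exact ne_of_gt (by linarith : (0:ℝ) < 2*x)
  have I3 : IntegrableOn f (Ioc (1/2) a) := by
    refine ((ContinuousOn.integrableOn_Icc ?_).mono_set Ioc_subset_Icc_self).congr_fun
      e3.symm measurableSet_Ioc
    refine ContinuousOn.div (by fun_prop) (by fun_prop) (fun x hx => ?_)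
    have := hx.1
    exact ne_of_gt (by linarith : (0:ℝ) < x)
  have I4 : IntegrableOn f (Ioc a 1) :=
    (((by fun_prop : Continuous fun b : ℝ => (1-a)*(1-b)^2/a)).integrableOn_Ioc).congr_fun
      e4.symm measurableSet_Ioc
  have u1 : Ioc (0:ℝ) (1/2) = Ioc 0 (1-a) ∪ Ioc (1-a) (1/2) :=
    (Ioc_union_Ioc_eq_Ioc (by linarith) (by linarith)).symm
  have u2 : Ioc (0:ℝ) a = Ioc 0 (1/2) ∪ Ioc (1/2) a :=
    (Ioc_union_Ioc_eq_Ioc (by linarith) (by linarith)).symm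
  have u3 : Ioc (0:ℝ) 1 = Ioc 0 a ∪ Ioc a 1 :=
    (Ioc_union_Ioc_eq_Ioc (by linarith) (by linarith)).symm
  have I12 : IntegrableOn f (Ioc 0 (1/2)) := by rw [u1]; exact I1.union I2
  have I123 : IntegrableOn f (Ioc 0 a) := by rw [u2]; exact I12.union I3
  rw [u3, setIntegral_union (Ioc_disjoint_Ioc_of_le le_rfl) measurableSet_Ioc I123 I4,
      u2, setIntegral_union (Ioc_disjoint_Ioc_of_le le_rfl) measurableSet_Ioc I12 I3,
      u1, setIntegral_union (Ioc_disjoint_Ioc_of_le le_rfl) measurableSet_Ioc I1 I2,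
      setIntegral_congr_fun measurableSet_Ioc e1,
      setIntegral_congr_fun measurableSet_Ioc e2,
      setIntegral_congr_fun measurableSet_Ioc e3,
      setIntegral_congr_fun measurableSet_Ioc e4]
  have w1 : ∫ b in Ioc (0:ℝ) (1-a), (1-a)*(1-b)/(2*a)
      = (1-a)*((1-a) - (1-a)^2/2)/(2*a) - (1-a)*((0:ℝ) - 0^2/2)/(2*a) := by
    refine ftc (l := 0) (r := 1-a) (F := fun b : ℝ => (1-a)*(b - b^2/2)/(2*a))
      (f := fun b : ℝ => (1-a)*(1-b)/(2*a)) (by linarith) (fun x _ => ?_) (by fun_prop)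
    have h := (((hasDerivAt_id x).sub ((hasDerivAt_pow 2 x).div_const 2)).const_mul
      (1-a)).div_const (2*a)
    refine h.congr_deriv ?_ <;> push_cast <;> ring
  have w2 : ∫ b in Ioc (1-a) (1/2 : ℝ), (1-a)^2/(2*b)
      = (1-a)^2/2*Real.log (1/2) - (1-a)^2/2*Real.log (1-a) := by
    refine ftc (l := 1-a) (r := 1/2) (F := fun b : ℝ => (1-a)^2/2*Real.log b)
      (f := fun b : ℝ => (1-a)^2/(2*b)) (by linarith) (fun x hx => ?_) ?_
    · have hx0 : (0:ℝ) < x := lt_of_lt_of_le (by linarith) hx.1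
      have h := (Real.hasDerivAt_log hx0.ne').const_mul ((1-a)^2/2)
      refine h.congr_deriv ?_ <;> field_simp <;> ring
    · refine ContinuousOn.div continuousOn_const (by fun_prop) (fun x hx => ?_)
      have := hx.1
      exact ne_of_gt (by linarith : (0:ℝ) < 2*x)
  have w3 : ∫ b in Ioc (1/2 : ℝ) a, (1-a)^2*(1-b)/b
      = (1-a)^2*(Real.log a - a) - (1-a)^2*(Real.log (1/2) - 1/2) := by
    refine ftc (l := 1/2) (r := a) (F := fun b : ℝ => (1-a)^2*(Real.log b - b))
      (f := fun b : ℝ => (1-a)^2*(1-b)/b) (by linarith) (fun x hx => ?_) ?_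
    · have hx0 : (0:ℝ) < x := lt_of_lt_of_le (by norm_num) hx.1
      have h := ((Real.hasDerivAt_log hx0.ne').sub (hasDerivAt_id x)).const_mul ((1-a)^2)
      refine h.congr_deriv ?_ <;> field_simp <;> ring
    · refine ContinuousOn.div (by fun_prop) (by fun_prop) (fun x hx => ?_)
      have := hx.1
      exact ne_of_gt (by linarith : (0:ℝ) < x)
  have w4 : ∫ b in Ioc a (1:ℝ), (1-a)*(1-b)^2/a
      = -((1-a)*(1-(1:ℝ))^3/(3*a)) - -((1-a)*(1-a)^3/(3*a)) := by
    refine ftc (l := a) (r := 1) (F := fun b : ℝ => -((1-a)*(1-b)^3/(3*a)))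
      (f := fun b : ℝ => (1-a)*(1-b)^2/a) (by linarith) (fun x _ => ?_) (by fun_prop)
    have hb : HasDerivAt (fun b : ℝ => (1:ℝ) - b) (-1) x := (hasDerivAt_id x).const_sub 1
    have h := (((hb.pow 3).const_mul (1-a)).div_const (3*a)).neg
    refine h.congr_deriv ?_ <;> push_cast <;> field_simp <;> ring
  rw [w1, w2, w3, w4]
  have hl : Real.log (1/2 : ℝ) = -Real.log 2 := by rw [one_div, Real.log_inv]
  rw [hl]
  unfold phi2
  field_simp
  ring

theorem integral_A :
    ∫ a in Set.Ioc (0:ℝ) 1, ∫ b in Set.Ioc (0:ℝ) 1,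
        min (1/2) (1 - a) * min (1/2) (1 - b) * min ((1 - a) / b) ((1 - b) / a)
      = (7/6) * Real.log 2 - 37/72 := by
  have hsub : Set.Icc (1/2:ℝ) 1 ⊆ {(0:ℝ)}ᶜ := by
    intro x hx
    simp only [Set.mem_compl_iff, Set.mem_singleton_iff]
    intro h
    rw [h] at hx
    norm_num [Set.mem_Icc] at hx
  set H : ℝ → ℝ := fun a => ∫ b in Set.Ioc (0:ℝ) 1,
      min (1/2) (1 - a) * min (1/2) (1 - b) * min ((1 - a) / b) ((1 - b) / a) with hH
  have E1 : EqOn H phi1 (Ioc 0 (1/2)) := fun a ha => inner1 ha.1 ha.2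
  have E2 : EqOn H phi2 (Ioc (1/2) 1) := fun a ha => inner2 ha.1 ha.2
  -- integrability of phi1 on (0,1/2]
  have Iphi1 : IntegrableOn phi1 (Ioc (0:ℝ) (1/2)) := by
    have hC : Continuous (fun a : ℝ => 5/8*a - 1/3*a^2 + 1/4*(1-a)*Real.log 2
        + 1/2*((1-a)*Real.log (1-a)) + 1/4*(a*Real.log a)) := by fun_prop
    have h : IntegrableOn (fun a : ℝ => (5/8*a - 1/3*a^2 + 1/4*(1-a)*Real.log 2
        + 1/2*((1-a)*Real.log (1-a)) + 1/4*(a*Real.log a)) + (-(1/4)) * Real.log a)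
        (Ioc (0:ℝ) (1/2)) := by
      have := (hC.integrableOn_Ioc (a := 0) (b := 1/2)).add (logint.const_mul (-(1/4)))
      simpa [Pi.add_def] using this
    refine h.congr_fun (fun x _ => ?_) measurableSet_Ioc
    simp only [phi1]
    ring
  have IH1 : IntegrableOn H (Ioc (0:ℝ) (1/2)) := Iphi1.congr_fun E1.symm measurableSet_Ioc
  -- integrability of phi2 on (1/2,1]
  have Iphi2 : IntegrableOn phi2 (Ioc (1/2:ℝ) 1) := by
    have hg : ContinuousOn (fun a : ℝ => 7/12*(1/a) + (1-a)^2*Real.log a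
        + (-(13:ℝ)/12 - 1/4*a + 17/12*a^2 - 2/3*a^3 + 1/2*(1-a)^2*Real.log 2
          - 1/2*((1-a)*((1-a)*Real.log (1-a))))) (Set.Icc (1/2:ℝ) 1) := by
      refine (ContinuousOn.add (ContinuousOn.add ?_ ?_) (Continuous.continuousOn (by fun_prop)))
      · refine continuousOn_const.mul (continuousOn_const.div continuousOn_id ?_)
        intro x hx
        have := hx.1
        exact ne_of_gt (by linarith)
      · exact ((by fun_prop : Continuous fun a : ℝ => (1-a)^2).continuousOn).mul
          (Real.continuousOn_log.mono hsub)
    refine ((hg.integrableOn_Icc).mono_set Ioc_subset_Icc_self).congr_fun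
      (fun x _ => ?_) measurableSet_Ioc
    simp only [phi2]
    ring
  have IH2 : IntegrableOn H (Ioc (1/2:ℝ) 1) := Iphi2.congr_fun E2.symm measurableSet_Ioc
  -- value of the first piece
  have V1 : ∫ a in Ioc (0:ℝ) (1/2), phi1 a = 1/4*Real.log 2 + 23/288 := by
    have h := ftc' (l := 0) (r := 1/2)
      (F := fun a : ℝ => 5/16*a^2 - 1/9*a^3 + 1/4*a - 1/16*a^2 + 1/8*(1-a)^2
        + 1/4*(a - a^2/2)*Real.log 2 - 1/4*((1-a)*((1-a)*Real.log (1-a)))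
        - 1/4*((1 - a/2)*(a*Real.log a)))
      (f := phi1) (by norm_num) (by fun_prop) ?_ Iphi1
    · rw [h]
      have hl2 : Real.log ((1:ℝ)/2) = -Real.log 2 := by
        rw [one_div, Real.log_inv]
      have hl3 : Real.log ((2:ℝ)⁻¹) = -Real.log 2 := Real.log_inv 2
      have hl : Real.log ((1:ℝ) - 1/2) = -Real.log 2 := by rw [show (1:ℝ)-1/2 = 1/2 by norm_num]; exact hl2
      norm_num [Real.log_zero, Real.log_one, hl2, hl3, hl]
      ring_nf
    · intro x hx
      have hx0 : (0:ℝ) < x := hx.1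
      have h1x : (1:ℝ) - x ≠ 0 := by have := hx.2; intro h; nlinarith
      have hmf : HasDerivAt (fun a : ℝ => 1 - a) (-1) x := (hasDerivAt_id x).const_sub 1
      have hml : HasDerivAt (fun a : ℝ => a * Real.log a) (Real.log x + 1) x :=
        Real.hasDerivAt_mul_log hx0.ne'
      have hml2 : HasDerivAt (fun a : ℝ => (1-a) * Real.log (1-a))
          ((Real.log (1-x) + 1) * (-1)) x := by
        have h := (Real.hasDerivAt_mul_log h1x).comp x hmf
        exact h
      have t1 := (hasDerivAt_pow 2 x).const_mul (5/16 : ℝ)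
      have t2 := (hasDerivAt_pow 3 x).const_mul (1/9 : ℝ)
      have t3 := (hasDerivAt_id x).const_mul (1/4 : ℝ)
      have t4 := (hasDerivAt_pow 2 x).const_mul (1/16 : ℝ)
      have t5 := (hmf.pow 2).const_mul (1/8 : ℝ)
      have t6 := (((hasDerivAt_id x).sub ((hasDerivAt_pow 2 x).div_const 2)).const_mul
        (1/4 : ℝ)).mul_const (Real.log 2)
      have t7 := (hmf.mul hml2).const_mul (1/4 : ℝ)
      have t8 := ((((hasDerivAt_id x).div_const 2).const_sub 1).mul hml).const_mul (1/4 : ℝ)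
      have h := ((((((t1.sub t2).add t3).sub t4).add t5).add t6).sub t7).sub t8
      refine h.congr_deriv ?_
      simp only [phi1, id_eq]
      push_cast
      ring
  -- value of the second piece
  have V2 : ∫ a in Ioc (1/2:ℝ) 1, phi2 a = 11/12*Real.log 2 - 19/32 := by
    have h := ftc' (l := 1/2) (r := 1)
      (F := fun a : ℝ => (11/12 - 1/3*(1-a)^3)*Real.log a
        + (-(13:ℝ)/12*a - 1/8*a^2 + 17/36*a^3 - 1/6*a^4 - a + a^2/2 - a^3/9 - 1/18*(1-a)^3)
        - 1/6*(1-a)^3*Real.log 2 + 1/6*((1-a)^2*((1-a)*Real.log (1-a))))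
      (f := phi2) (by norm_num) ?_ ?_ Iphi2
    · rw [h]
      have hl2 : Real.log ((1:ℝ)/2) = -Real.log 2 := by rw [one_div, Real.log_inv]
      have hl3 : Real.log ((2:ℝ)⁻¹) = -Real.log 2 := Real.log_inv 2
      have hl : Real.log ((1:ℝ) - 1/2) = -Real.log 2 := by rw [show (1:ℝ)-1/2 = 1/2 by norm_num]; exact hl2
      norm_num [Real.log_zero, Real.log_one, hl2, hl3, hl]
      ring_nf
    · refine (ContinuousOn.add (ContinuousOn.sub (ContinuousOn.add
        (ContinuousOn.mul (Continuous.continuousOn (by fun_prop))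
          (Real.continuousOn_log.mono hsub))
        (Continuous.continuousOn (by fun_prop)))
        (Continuous.continuousOn (by fun_prop)))
        (Continuous.continuousOn (by fun_prop)))
    · intro x hx
      have hx0 : (0:ℝ) < x := by have := hx.1; linarith
      have h1x : (1:ℝ) - x ≠ 0 := by have := hx.2; intro h; nlinarith
      have hmf : HasDerivAt (fun a : ℝ => 1 - a) (-1) x := (hasDerivAt_id x).const_sub 1
      have hml2 : HasDerivAt (fun a : ℝ => (1-a) * Real.log (1-a))
          ((Real.log (1-x) + 1) * (-1)) x := by
        have h := (Real.hasDerivAt_mul_log h1x).comp x hmf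
        exact h
      have hlog : HasDerivAt Real.log x⁻¹ x := Real.hasDerivAt_log hx0.ne'
      have u1 := (((hmf.pow 3).const_mul (1/3 : ℝ)).const_sub (11/12 : ℝ)).mul hlog
      have m1 := (hasDerivAt_id x).const_mul (-(13:ℝ)/12)
      have m2 := (hasDerivAt_pow 2 x).const_mul (1/8 : ℝ)
      have m3 := (hasDerivAt_pow 3 x).const_mul (17/36 : ℝ)
      have m4 := (hasDerivAt_pow 4 x).const_mul (1/6 : ℝ)
      have m5 := hasDerivAt_id x
      have m6 := (hasDerivAt_pow 2 x).div_const 2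
      have m7 := (hasDerivAt_pow 3 x).div_const 9
      have m8 := (hmf.pow 3).const_mul (1/18 : ℝ)
      have u2 := ((((((m1.sub m2).add m3).sub m4).sub m5).add m6).sub m7).sub m8
      have u3 := ((hmf.pow 3).const_mul (1/6 : ℝ)).mul_const (Real.log 2)
      have u4 := ((hmf.pow 2).mul hml2).const_mul (1/6 : ℝ)
      have h := ((u1.add u2).sub u3).add u4
      refine h.congr_deriv ?_
      simp only [phi2, id_eq, Pi.pow_apply]
      push_cast
      field_simp
      ring
  -- put everything together
  have hsplit : Ioc (0:ℝ) 1 = Ioc 0 (1/2) ∪ Ioc (1/2) 1 :=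
    (Ioc_union_Ioc_eq_Ioc (by norm_num) (by norm_num)).symm
  rw [show (∫ a in Set.Ioc (0:ℝ) 1, ∫ b in Set.Ioc (0:ℝ) 1,
      min (1/2) (1 - a) * min (1/2) (1 - b) * min ((1 - a) / b) ((1 - b) / a))
      = ∫ a in Set.Ioc (0:ℝ) 1, H a from rfl]
  rw [hsplit, setIntegral_union (Ioc_disjoint_Ioc_of_le le_rfl) measurableSet_Ioc IH1 IH2,
      setIntegral_congr_fun measurableSet_Ioc E1,
      setIntegral_congr_fun measurableSet_Ioc E2, V1, V2]
  ring
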